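/- Let Γ be a set, F : Γ → Option Γ a partial map, and T the induced bounded linear operator on ℓ¹(Γ). Then the range of T equals the subspace {y ∈ ℓ¹(Γ) : y δ = 0 for every δ ∈ Γ that is not of the form F γ = some δ for some γ ∈ Γ}; in particular T has closed range. -/

import Mathlib

/-- The coordinate vector `e_γ` in `ℓ¹(Γ)`. -/
noncomputable def eVec {Γ : Type*} (γ : Γ) : lp (fun _ : Γ => ℝ) 1 :=
  letI := Classical.decEq Γ
  lp.single 1 γ (1 : ℝ)

/-- Evaluation at a coordinate as a continuous linear map on `ℓ¹`. -/
noncomputable def evalCLM {Γ : Type*} (δ : Γ) : lp (fun _ : Γ => ℝ) 1 →L[ℝ] ℝ :=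
  LinearMap.mkContinuous
    { toFun := fun f => f δ
      map_add' := fun f g => by simp
      map_smul' := fun c f => by simp }
    1 (fun f => by
      show ‖f δ‖ ≤ 1 * ‖f‖
      simpa using lp.norm_apply_le_norm (p := 1) one_ne_zero f δ)

lemma evalCLM_apply {Γ : Type*} (δ : Γ) (f : lp (fun _ : Γ => ℝ) 1) :
    evalCLM δ f = f δ := rfl

lemma hasSum_smul_eVec {Γ : Type*} (x : lp (fun _ : Γ => ℝ) 1) :
    HasSum (fun γ => x γ • eVec γ) x := by
  classical
  have h := lp.hasSum_single (E := fun _ : Γ => ℝ) (p := 1) (by norm_num) x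
  refine h.congr_fun fun γ => ?_
  rw [eVec]
  rw [← lp.single_smul]
  norm_num

theorem stmt14 {Γ : Type*} (F : Γ → Option Γ)
    (T : lp (fun _ : Γ => ℝ) 1 →L[ℝ] lp (fun _ : Γ => ℝ) 1)
    (hT_some : ∀ γ δ : Γ, F γ = some δ → T (eVec γ) = eVec δ)
    (hT_none : ∀ γ : Γ, F γ = none → T (eVec γ) = 0) :
    Set.range T = {y : lp (fun _ : Γ => ℝ) 1 | ∀ δ : Γ, (∀ γ : Γ, F γ ≠ some δ) → y δ = 0} ∧
    IsClosed (Set.range T) := by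
  classical
  have key : Set.range T =
      {y : lp (fun _ : Γ => ℝ) 1 | ∀ δ : Γ, (∀ γ : Γ, F γ ≠ some δ) → y δ = 0} := by
    apply Set.Subset.antisymm
    · rintro _ ⟨x, rfl⟩ δ hδ
      -- (T x) δ = 0
      have h1 : HasSum (fun γ => x γ • T (eVec γ)) (T x) :=
        T.hasSum (hasSum_smul_eVec x) |>.congr_fun (fun γ => by simp)
      have h2 : HasSum (fun γ => evalCLM δ (x γ • T (eVec γ))) (evalCLM δ (T x)) :=
        (evalCLM δ).hasSum h1
      have h3 : ∀ γ, evalCLM δ (x γ • T (eVec γ)) = 0 := by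
        intro γ
        rcases hF : F γ with _ | δ'
        · rw [hT_none γ hF]; simp
        · rw [hT_some γ δ' hF]
          have hne : δ ≠ δ' := fun h => hδ γ (h ▸ hF)
          rw [evalCLM_apply]
          have : (x γ • eVec δ') δ = x γ • (eVec δ' : ∀ _ : Γ, ℝ) δ := rfl
          rw [show ((x γ • eVec δ' : lp (fun _ : Γ => ℝ) 1) : ∀ _ : Γ, ℝ) δ
              = x γ * (eVec δ' : ∀ _ : Γ, ℝ) δ from rfl]
          rw [eVec, lp.single_apply_ne 1 δ' _ hne, mul_zero]
      have hz : HasSum (fun γ => evalCLM δ (x γ • T (eVec γ))) 0 := by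
        rw [funext h3]; exact hasSum_zero
      exact h2.unique hz
    · intro y hy
      -- construct a preimage
      set P : Γ → Prop := fun δ => ∃ γ, F γ = some δ with hP
      set g : Γ → Γ := fun δ => if h : P δ then h.choose else δ with hgdef
      have hg : ∀ δ, P δ → F (g δ) = some δ := by
        intro δ h
        simp only [hgdef, dif_pos h]
        exact h.choose_spec
      set ι : {δ // P δ} → Γ := fun d => g d.1 with hι
      have hι_inj : Function.Injective ι := by
        rintro d₁ d₂ h
        have h1 : F (ι d₁) = some d₁.1 := hg _ d₁.2
        have h2 : F (ι d₂) = some d₂.1 := hg _ d₂.2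
        rw [h, h2] at h1
        exact Subtype.ext (Option.some_injective _ h1).symm
      set xf : Γ → ℝ := fun γ => if h : ∃ δ, P δ ∧ γ = g δ then y h.choose else 0 with hxf
      have hxfA : ∀ δ (h : P δ), xf (g δ) = y δ := by
        intro δ h
        have hex : ∃ δ', P δ' ∧ g δ = g δ' := ⟨δ, h, rfl⟩
        show (if h : ∃ δ', P δ' ∧ g δ = g δ' then (y : Γ → ℝ) h.choose else 0) = y δ
        rw [dif_pos hex]
        obtain ⟨hP', heq⟩ := hex.choose_spec
        have := hg _ hP'
        rw [← heq, hg δ h] at this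
        exact (congrArg (fun t => (y : Γ → ℝ) t) (Option.some_injective _ this)).symm
      have hxfB : ∀ γ, γ ∉ Set.range ι → xf γ = 0 := by
        intro γ hγ
        show (if h : ∃ δ, P δ ∧ γ = g δ then (y : Γ → ℝ) h.choose else 0) = 0
        rw [dif_neg]
        rintro ⟨δ, hPδ, rfl⟩
        exact hγ ⟨⟨δ, hPδ⟩, rfl⟩
      have hy_summ : Summable fun δ => ‖y δ‖ := by
        have := (lp.memℓp y).summable (p := 1) (by norm_num)
        simpa using this
      have hx_mem : Memℓp xf 1 := by
        rw [memℓp_gen_iff (by norm_num)]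
        have hsub : Summable fun d : {δ // P δ} => ‖y d.1‖ := hy_summ.subtype _
        have : Summable fun d : {δ // P δ} => ‖xf (ι d)‖ := by
          refine hsub.congr fun d => ?_
          rw [hι, hxfA d.1 d.2]
        have := (hι_inj.summable_iff (f := fun γ => ‖xf γ‖)
          (fun γ hγ => by show ‖xf γ‖ = 0; rw [hxfB γ hγ, norm_zero])).mp this
        simpa using this
      set x : lp (fun _ : Γ => ℝ) 1 := ⟨xf, hx_mem⟩ with hx
      refine ⟨x, ?_⟩
      have hxcoe : ∀ γ, x γ = xf γ := fun γ => rfl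
      have h1 : HasSum (fun γ => xf γ • T (eVec γ)) (T x) :=
        (T.hasSum (hasSum_smul_eVec x)).congr_fun (fun γ => by rw [map_smul, hxcoe])
      have h2 : HasSum (fun γ => xf γ • T (eVec γ)) y := by
        rw [← hι_inj.hasSum_iff (f := fun γ => xf γ • T (eVec γ))
          (fun γ hγ => by show xf γ • T (eVec γ) = 0; rw [hxfB γ hγ, zero_smul])]
        have hbase : HasSum (fun δ => y δ • eVec δ) y := hasSum_smul_eVec y
        have hsupp : (Function.support fun δ => y δ • eVec δ) ⊆ {δ | P δ} := by
          intro δ hδ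
          by_contra hPδ
          have hyδ : y δ = 0 := hy δ (fun γ hγ => hPδ ⟨γ, hγ⟩)
          apply hδ
          simp [hyδ]
        have hsub : HasSum (fun d : {δ // P δ} => y d.1 • eVec d.1) y := by
          have := (hasSum_subtype_iff_of_support_subset hsupp).mpr hbase
          exact this
        refine hsub.congr_fun fun d => ?_
        show xf (ι d) • T (eVec (ι d)) = y d.1 • eVec d.1
        rw [hι, hxfA d.1 d.2, hT_some _ _ (hg d.1 d.2)]
      exact h1.unique h2
  refine ⟨key, ?_⟩
  rw [key]
  have : {y : lp (fun _ : Γ => ℝ) 1 | ∀ δ : Γ, (∀ γ : Γ, F γ ≠ some δ) → y δ = 0} =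
      ⋂ δ : Γ, {y : lp (fun _ : Γ => ℝ) 1 | (∀ γ : Γ, F γ ≠ some δ) → y δ = 0} := by
    ext y; simp [Set.mem_iInter]
  rw [this]
  refine isClosed_iInter fun δ => ?_
  by_cases h : ∀ γ : Γ, F γ ≠ some δ
  · have : {y : lp (fun _ : Γ => ℝ) 1 | (∀ γ : Γ, F γ ≠ some δ) → y δ = 0} =
        (evalCLM δ) ⁻¹' {0} := by
      ext y; simp [h, evalCLM_apply]
    rw [this]
    exact isClosed_singleton.preimage (evalCLM δ).continuous
  · have : {y : lp (fun _ : Γ => ℝ) 1 | (∀ γ : Γ, F γ ≠ some δ) → y δ = 0} = Set.univ := by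
      ext y; simp [h]
    rw [this]
    exact isClosed_univ
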